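/- arXiv:1306.5599 — 4 statements merged into one kernel-verified Lean document; each statement's English description precedes it below -/
import Mathlib

section
/- If unit spheres are centered at the 12 vertices of a regular icosahedron with side length 2 centered at the origin, then each of these spheres is tangent to (kisses) the unit sphere centered at the origin, and no two of the 12 spheres overlap (their interiors are pairwise disjoint). Hence the kissing number of the unit sphere in 3-dimensional Euclidean space is at least 12. -/
open Real

/-- The golden ratio. -/
noncomputable def goldenφ : ℝ := (1 + Real.sqrt 5) / 2

lemma phi_sq : goldenφ ^ 2 = goldenφ + 1 := by
  have h5 : Real.sqrt 5 ^ 2 = 5 := Real.sq_sqrt (by norm_num)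
  unfold goldenφ; nlinarith [h5]

lemma phi_ge : 1 ≤ goldenφ := by
  have h : (1:ℝ) ≤ Real.sqrt 5 := by
    rw [show (1:ℝ) = Real.sqrt 1 by simp]
    exact Real.sqrt_le_sqrt (by norm_num)
  unfold goldenφ; linarith

lemma phi_le : goldenφ ≤ 2 := by
  have h : Real.sqrt 5 ≤ 3 := by
    rw [show (3:ℝ) = Real.sqrt 9 by
      rw [show (9:ℝ) = 3^2 by norm_num, Real.sqrt_sq]; norm_num]
    exact Real.sqrt_le_sqrt (by norm_num)
  unfold goldenφ; linarith

lemma dist_sq3 (x y : EuclideanSpace ℝ (Fin 3)) :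
    dist x y ^ 2 = (x 0 - y 0)^2 + (x 1 - y 1)^2 + (x 2 - y 2)^2 := by
  rw [EuclideanSpace.dist_eq, Real.sq_sqrt (by positivity)]
  simp [Fin.sum_univ_three, Real.dist_eq, sq_abs]

lemma key (u v : EuclideanSpace ℝ (Fin 3)) (h : 1 + goldenφ ^ 2 ≤ dist u v ^ 2) :
    2 ≤ dist ((2 / Real.sqrt (1 + goldenφ ^ 2)) • u)
        ((2 / Real.sqrt (1 + goldenφ ^ 2)) • v) := by
  have h2 : (0:ℝ) < 1 + goldenφ ^ 2 := by positivity
  have hsp : 0 < Real.sqrt (1 + goldenφ ^ 2) := Real.sqrt_pos.mpr h2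
  have hss : Real.sqrt (1 + goldenφ ^ 2) ^ 2 = 1 + goldenφ ^ 2 := Real.sq_sqrt h2.le
  rw [dist_smul₀, Real.norm_eq_abs, abs_of_pos (by positivity), div_mul_eq_mul_div,
    le_div_iff₀ hsp]
  nlinarith [dist_nonneg (x := u) (y := v), hsp]

lemma key0 (u : EuclideanSpace ℝ (Fin 3)) (h : dist u 0 ^ 2 = 1 + goldenφ ^ 2) :
    dist ((2 / Real.sqrt (1 + goldenφ ^ 2)) • u) 0 = 2 := by
  have h2 : (0:ℝ) < 1 + goldenφ ^ 2 := by positivity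
  have hsp : 0 < Real.sqrt (1 + goldenφ ^ 2) := Real.sqrt_pos.mpr h2
  have hd : dist u 0 = Real.sqrt (1 + goldenφ ^ 2) := by
    rw [← h, Real.sqrt_sq dist_nonneg]
  rw [show (0 : EuclideanSpace ℝ (Fin 3)) = (2 / Real.sqrt (1 + goldenφ ^ 2)) • 0 by simp,
    dist_smul₀, Real.norm_eq_abs, abs_of_pos (by positivity), hd]
  field_simp

/-- Centers of the 12 kissing spheres: rescaled vertices of a regular icosahedron
with side length 2 (vertices are the cyclic permutations of (0, ±1, ±φ)),
scaled so that each center lies at distance 2 from the origin. -/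
noncomputable def kissingCenters : List (EuclideanSpace ℝ (Fin 3)) :=
  ([!₂[0, 1, goldenφ], !₂[0, 1, -goldenφ], !₂[0, -1, goldenφ], !₂[0, -1, -goldenφ],
    !₂[goldenφ, 0, 1], !₂[-goldenφ, 0, 1], !₂[goldenφ, 0, -1], !₂[-goldenφ, 0, -1],
    !₂[1, goldenφ, 0], !₂[1, -goldenφ, 0], !₂[-1, goldenφ, 0], !₂[-1, -goldenφ, 0]]
      : List (EuclideanSpace ℝ (Fin 3))).map
    (fun v => (2 / Real.sqrt (1 + goldenφ ^ 2)) • v)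

set_option maxHeartbeats 2000000 in
/-- Unit spheres centered at the (rescaled) 12 vertices of a regular icosahedron all
kiss the unit sphere at the origin (centers at distance exactly 2 from the origin),
and no two of them overlap (distinct centers at distance at least 2).
Hence the kissing number in dimension 3 is at least 12. -/
theorem kissing_number_three_ge_twelve :
    kissingCenters.length = 12 ∧
    (∀ p ∈ kissingCenters, dist p (0 : EuclideanSpace ℝ (Fin 3)) = 2) ∧
    (∀ p ∈ kissingCenters, ∀ q ∈ kissingCenters, p ≠ q → 2 ≤ dist p q) := by
  refine ⟨by simp [kissingCenters], ?_, ?_⟩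
  · intro p hp
    simp only [kissingCenters, List.mem_map, List.mem_cons, List.not_mem_nil, or_false] at hp
    obtain ⟨u, hu, rfl⟩ := hp
    apply key0
    rw [dist_sq3]
    rcases hu with rfl|rfl|rfl|rfl|rfl|rfl|rfl|rfl|rfl|rfl|rfl|rfl <;>
      (simp <;> nlinarith [phi_sq])
  · intro p hp q hq hne
    simp only [kissingCenters, List.mem_map, List.mem_cons, List.not_mem_nil, or_false] at hp hq
    obtain ⟨u, hu, rfl⟩ := hp
    obtain ⟨v, hv, rfl⟩ := hq
    apply key
    rw [dist_sq3]
    rcases hu with rfl|rfl|rfl|rfl|rfl|rfl|rfl|rfl|rfl|rfl|rfl|rfl <;>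
      rcases hv with rfl|rfl|rfl|rfl|rfl|rfl|rfl|rfl|rfl|rfl|rfl|rfl <;>
      first
        | (simp <;> nlinarith [phi_sq, phi_ge, phi_le])
        | exact absurd rfl hne
end

section
/- The volume of the intersection of three mutually perpendicular solid cylinders of radius r (with axes along the coordinate axes) equals 8(2−√2)r³. -/
open MeasureTheory Real

noncomputable def phi (r x : ℝ) : ℝ :=
  if x^2 ≤ r^2/2 then 4*(abs x)*Real.sqrt (r^2-x^2) + π*r^2 - 4*r^2*Real.arcsin ((abs x)/r)
  else if x^2 ≤ r^2 then 4*(r^2-x^2) else 0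

private lemma arcsin_sqrt2 : Real.arcsin (Real.sqrt 2 / 2) = π/4 := by
  rw [← Real.sin_pi_div_four, Real.arcsin_sin (by linarith [Real.pi_pos]) (by linarith [Real.pi_pos])]

-- antiderivative on [0,c]
private lemma hasDerivAt_A (r x : ℝ) (hr : 0 < r) (hx2 : x^2 < r^2) :
    HasDerivAt (fun x => (-(4:ℝ)/3)*((r^2-x^2)*Real.sqrt (r^2-x^2)) + π*r^2*x
        - 4*r^2*(x*Real.arcsin (x/r) + Real.sqrt (r^2-x^2)))
      (4*x*Real.sqrt (r^2-x^2) + π*r^2 - 4*r^2*Real.arcsin (x/r)) x := by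
  have hpos : 0 < r^2 - x^2 := by linarith
  have hs : (0:ℝ) < Real.sqrt (r^2 - x^2) := Real.sqrt_pos.mpr hpos
  have hsq : Real.sqrt (r^2 - x^2) ^ 2 = r^2 - x^2 := Real.sq_sqrt hpos.le
  have h1 : HasDerivAt (fun x : ℝ => r^2 - x^2) (-(2*x)) x := by
    simpa using ((hasDerivAt_pow 2 x).const_sub (r^2))
  have h2 : HasDerivAt (fun x : ℝ => Real.sqrt (r^2 - x^2))
      (-(2*x) / (2 * Real.sqrt (r^2 - x^2))) x := h1.sqrt hpos.ne'
  have h3 : HasDerivAt (fun x : ℝ => (r^2-x^2) * Real.sqrt (r^2 - x^2))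
      ((-(2*x)) * Real.sqrt (r^2 - x^2) + (r^2-x^2) * (-(2*x) / (2 * Real.sqrt (r^2 - x^2)))) x :=
    h1.mul h2
  have hxr : |x / r| < 1 := by
    rw [abs_div, abs_of_pos hr, div_lt_one hr]
    nlinarith [abs_nonneg x, sq_abs x]
  have hne1 : x / r ≠ 1 := fun h => by simp [h] at hxr
  have hne1' : x / r ≠ -1 := fun h => by simp [h] at hxr
  have h5 : HasDerivAt (fun x : ℝ => Real.arcsin (x / r))
      (1 / Real.sqrt (1 - (x/r)^2) * (1/r)) x := by
    have h4' : HasDerivAt Real.arcsin (1 / Real.sqrt (1 - (x/r)^2)) (x/r) :=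
      Real.hasDerivAt_arcsin hne1' hne1
    exact h4'.comp x ((hasDerivAt_id x).div_const r)
  have key0 : 1 - (x/r)^2 = (r^2 - x^2)/r^2 := by field_simp
  have key : Real.sqrt (1 - (x/r)^2) = Real.sqrt (r^2 - x^2) / r := by
    rw [key0, Real.sqrt_div hpos.le, Real.sqrt_sq hr.le]
  have h6 : HasDerivAt (fun x : ℝ => x * Real.arcsin (x / r))
      (1 * Real.arcsin (x/r) + x * (1 / Real.sqrt (1 - (x/r)^2) * (1/r))) x :=
    (hasDerivAt_id x).mul h5
  have h7 := ((h3.const_mul ((-(4:ℝ)/3))).add ((hasDerivAt_id x).const_mul (π*r^2))).sub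
      ((h6.add h2).const_mul (4*r^2))
  refine h7.congr_deriv (Eq.symm ?_)
  rw [key]
  field_simp
  linear_combination (4*x) * hsq

private lemma arcsin_sqrt_one_sub (t : ℝ) (h0 : 0 ≤ t) :
    Real.arcsin (Real.sqrt (1 - t^2)) = π/2 - Real.arcsin t := by
  have hθ0 : 0 ≤ Real.arcsin t := Real.arcsin_nonneg.mpr h0
  have hθ1 : Real.arcsin t ≤ π/2 := Real.arcsin_le_pi_div_two t
  have : Real.sqrt (1 - t^2) = Real.sin (π/2 - Real.arcsin t) := by
    rw [Real.sin_pi_div_two_sub, Real.cos_arcsin]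
  rw [this, Real.arcsin_sin (by linarith) (by linarith)]

private lemma slice_z (r x y : ℝ) :
    volume {z : ℝ | x^2+y^2 ≤ r^2 ∧ y^2+z^2 ≤ r^2 ∧ x^2+z^2 ≤ r^2} =
    if x^2 + y^2 ≤ r^2 then ENNReal.ofReal (2 * Real.sqrt (r^2 - max (x^2) (y^2))) else 0 := by
  split_ifs with h
  · have hm : 0 ≤ r^2 - max (x^2) (y^2) := by
      rcases max_cases (x^2) (y^2) with ⟨he, _⟩ | ⟨he, _⟩ <;> nlinarith [sq_nonneg x, sq_nonneg y]
    have hset : {z : ℝ | x^2+y^2 ≤ r^2 ∧ y^2+z^2 ≤ r^2 ∧ x^2+z^2 ≤ r^2}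
        = Set.Icc (-Real.sqrt (r^2 - max (x^2) (y^2))) (Real.sqrt (r^2 - max (x^2) (y^2))) := by
      ext z
      simp only [Set.mem_setOf_eq, Set.mem_Icc, h, true_and]
      rw [← Real.sq_le hm]
      constructor
      · rintro ⟨h1, h2⟩
        rcases max_cases (x^2) (y^2) with ⟨he, _⟩ | ⟨he, _⟩ <;> rw [he] <;> linarith
      · intro hz
        rcases le_max_iff.mpr (Or.inl (le_refl (x^2))), le_max_iff.mpr (Or.inr (le_refl (y^2))) with _
        constructor <;> nlinarith [le_max_left (x^2) (y^2), le_max_right (x^2) (y^2)]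
    rw [hset, Real.volume_Icc]
    ring_nf
  · have : {z : ℝ | x^2+y^2 ≤ r^2 ∧ y^2+z^2 ≤ r^2 ∧ x^2+z^2 ≤ r^2} = ∅ := by
      ext z; simp only [Set.mem_setOf_eq, Set.mem_empty_iff_false, iff_false]
      rintro ⟨h1, _, _⟩; exact h h1
    rw [this]; simp

private lemma hasDerivAt_F (r y : ℝ) (hr : 0 < r) (hy : y^2 < r^2) :
    HasDerivAt (fun y => y * Real.sqrt (r^2 - y^2) + r^2 * Real.arcsin (y / r))
      (2 * Real.sqrt (r^2 - y^2)) y := by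
  have hpos : 0 < r^2 - y^2 := by linarith
  have hs : (0:ℝ) < Real.sqrt (r^2 - y^2) := Real.sqrt_pos.mpr hpos
  have hsq : Real.sqrt (r^2 - y^2) ^ 2 = r^2 - y^2 := Real.sq_sqrt hpos.le
  have h1 : HasDerivAt (fun y : ℝ => r^2 - y^2) (-(2*y)) y := by
    simpa using ((hasDerivAt_pow 2 y).const_sub (r^2))
  have h2 : HasDerivAt (fun y : ℝ => Real.sqrt (r^2 - y^2))
      (-(2*y) / (2 * Real.sqrt (r^2 - y^2))) y := h1.sqrt hpos.ne'
  have h3 : HasDerivAt (fun y : ℝ => y * Real.sqrt (r^2 - y^2))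
      (1 * Real.sqrt (r^2 - y^2) + y * (-(2*y) / (2 * Real.sqrt (r^2 - y^2)))) y :=
    (hasDerivAt_id y).mul h2
  have hyr : |y / r| < 1 := by
    rw [abs_div, abs_of_pos hr, div_lt_one hr]
    nlinarith [abs_nonneg y, sq_abs y]
  have hne1 : y / r ≠ 1 := fun h => by simp [h] at hyr
  have hne1' : y / r ≠ -1 := fun h => by simp [h] at hyr
  have h4' : HasDerivAt Real.arcsin (1 / Real.sqrt (1 - (y/r)^2)) (y/r) :=
    Real.hasDerivAt_arcsin hne1' hne1
  have h5 : HasDerivAt (fun y : ℝ => Real.arcsin (y / r))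
      (1 / Real.sqrt (1 - (y/r)^2) * (1/r)) y := by
    exact h4'.comp y ((hasDerivAt_id y).div_const r)
  have h6 : HasDerivAt (fun y : ℝ => r^2 * Real.arcsin (y / r))
      (r^2 * (1 / Real.sqrt (1 - (y/r)^2) * (1/r))) y := h5.const_mul (r^2)
  have key0 : 1 - (y/r)^2 = (r^2 - y^2)/r^2 := by field_simp
  have key : Real.sqrt (1 - (y/r)^2) = Real.sqrt (r^2 - y^2) / r := by
    rw [key0, Real.sqrt_div hpos.le, Real.sqrt_sq hr.le]
  have := h3.add h6
  refine this.congr_deriv (Eq.symm ?_)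
  rw [key]
  field_simp
  linear_combination hsq

private lemma psi_cont (r x : ℝ) : Continuous (fun y : ℝ => 2 * Real.sqrt (r^2 - max (x^2) (y^2))) := by
  apply continuous_const.mul
  exact (continuous_const.sub (continuous_const.max ((continuous_pow 2)))).sqrt

private lemma J_eval (r x : ℝ) (hr : 0 < r) (hxr : x^2 ≤ r^2) :
    ∫ y in (-(Real.sqrt (r^2-x^2)))..(Real.sqrt (r^2-x^2)),
        2 * Real.sqrt (r^2 - max (x^2) (y^2)) = phi r x := by
  set s := Real.sqrt (r^2-x^2) with hs_def
  have hs0 : 0 ≤ s := Real.sqrt_nonneg _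
  have hs2 : s^2 = r^2 - x^2 := Real.sq_sqrt (by linarith)
  set ψ : ℝ → ℝ := fun y => 2 * Real.sqrt (r^2 - max (x^2) (y^2)) with hψ
  have hψc : Continuous ψ := psi_cont r x
  by_cases hx2 : x^2 ≤ r^2/2
  · -- |x| ≤ s
    set a := |x| with ha_def
    have ha0 : 0 ≤ a := abs_nonneg x
    have ha2 : a^2 = x^2 := sq_abs x
    have has : a ≤ s := by
      rw [hs_def, ← Real.sqrt_sq ha0, ha2]
      exact Real.sqrt_le_sqrt (by linarith)
    -- right piece
    have hsub : ∀ b c : ℝ, a ≤ b → b ≤ s → c ∈ Set.uIcc b s → ψ c = 2 * Real.sqrt (r^2 - c^2) := by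
      intro b c hb hbs hc
      rw [Set.uIcc_of_le hbs] at hc
      have : x^2 ≤ c^2 := by
        rw [← ha2]
        have : a ≤ c := le_trans hb hc.1
        nlinarith
      simp [hψ, max_eq_right this]
    have hright : ∫ y in a..s, ψ y
        = (s * Real.sqrt (r^2 - s^2) + r^2 * Real.arcsin (s/r))
          - (a * Real.sqrt (r^2 - a^2) + r^2 * Real.arcsin (a/r)) := by
      rw [intervalIntegral.integral_congr (fun c hc => hsub a c le_rfl has hc)]
      apply intervalIntegral.integral_eq_sub_of_hasDeriv_right_of_le (f := fun y => y * Real.sqrt (r^2 - y^2) + r^2 * Real.arcsin (y/r)) has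
      · apply Continuous.continuousOn
        apply Continuous.add
        · exact continuous_id.mul (continuous_const.sub (continuous_pow 2)).sqrt
        · exact continuous_const.mul (Real.continuous_arcsin.comp (continuous_id.div_const r))
      · intro y hy
        have hy2 : y^2 < r^2 := by
          have h1 : a < y := hy.1
          have h2 : y < s := hy.2
          nlinarith
        exact ((hasDerivAt_F r y hr hy2).hasDerivWithinAt)
      · exact ((continuous_const.mul (continuous_const.sub (continuous_pow 2)).sqrt)).intervalIntegrable a s
    have hleft : ∫ y in (-s)..(-a), ψ y = ∫ y in a..s, ψ y := by
      rw [← intervalIntegral.integral_comp_neg ψ]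
      apply intervalIntegral.integral_congr
      intro c hc
      simp [hψ, neg_sq]
    have hmid : ∫ y in (-a)..a, ψ y = 2*a * (2 * Real.sqrt (r^2 - x^2)) := by
      have : ∀ c ∈ Set.uIcc (-a) a, ψ c = 2 * Real.sqrt (r^2 - x^2) := by
        intro c hc
        rw [Set.uIcc_of_le (by linarith)] at hc
        have : c^2 ≤ x^2 := by rw [← ha2]; nlinarith [hc.1, hc.2]
        simp [hψ, max_eq_left this]
      rw [intervalIntegral.integral_congr this, intervalIntegral.integral_const, smul_eq_mul]
      ring
    have hsplit : ∫ y in (-s)..s, ψ y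
        = (∫ y in (-s)..(-a), ψ y) + (∫ y in (-a)..a, ψ y) + (∫ y in a..s, ψ y) := by
      rw [intervalIntegral.integral_add_adjacent_intervals (hψc.intervalIntegrable _ _) (hψc.intervalIntegrable _ _),
        intervalIntegral.integral_add_adjacent_intervals (hψc.intervalIntegrable _ _) (hψc.intervalIntegrable _ _)]
    have hsr : Real.sqrt (r^2 - s^2) = a := by
      rw [hs2]; simp [ha_def, Real.sqrt_sq_eq_abs]
    have har : Real.sqrt (r^2 - a^2) = s := by rw [ha2]
    have harcsin : Real.arcsin (s/r) = π/2 - Real.arcsin (a/r) := by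
      have h1 : s/r = Real.sqrt (1 - (a/r)^2) := by
        have h2 : 1 - (a/r)^2 = (r^2-x^2)/r^2 := by
          rw [div_pow, ha2]; field_simp
        rw [h2, Real.sqrt_div (by linarith : (0:ℝ) ≤ r^2 - x^2), Real.sqrt_sq hr.le, hs_def]
      rw [h1, arcsin_sqrt_one_sub (a/r) (by positivity)]
    rw [hsplit, hleft, hmid, hright, hsr, har, harcsin]
    rw [phi, if_pos hx2]
    ring
  · -- s ≤ |x|, constant integrand
    have hsa : s^2 ≤ x^2 := by rw [hs2]; linarith
    have : ∀ c ∈ Set.uIcc (-s) s, ψ c = 2 * Real.sqrt (r^2 - x^2) := by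
      intro c hc
      rw [Set.uIcc_of_le (by linarith)] at hc
      have : c^2 ≤ x^2 := by nlinarith [hc.1, hc.2]
      simp [hψ, max_eq_left this]
    rw [intervalIntegral.integral_congr this, intervalIntegral.integral_const]
    rw [phi, if_neg hx2, if_pos hxr]
    have : (s - -s) = 2*s := by ring
    rw [this]
    rw [smul_eq_mul, hs_def]
    rw [show (2*Real.sqrt (r^2-x^2)) * (2*Real.sqrt (r^2-x^2)) = 4 * (Real.sqrt (r^2-x^2))^2 by ring]
    rw [Real.sq_sqrt (by linarith)]

private lemma inner_int (r : ℝ) (hr : 0 < r) (x : ℝ) :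
    (∫⁻ y, volume {z : ℝ | x^2+y^2 ≤ r^2 ∧ y^2+z^2 ≤ r^2 ∧ x^2+z^2 ≤ r^2})
      = ENNReal.ofReal (phi r x) ∧ 0 ≤ phi r x := by
  have hcong : (∫⁻ y, volume {z : ℝ | x^2+y^2 ≤ r^2 ∧ y^2+z^2 ≤ r^2 ∧ x^2+z^2 ≤ r^2})
      = ∫⁻ y, (if x^2 + y^2 ≤ r^2 then ENNReal.ofReal (2 * Real.sqrt (r^2 - max (x^2) (y^2))) else 0) :=
    lintegral_congr (fun y => slice_z r x y)
  by_cases hxr : x^2 ≤ r^2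
  · set s := Real.sqrt (r^2-x^2) with hs_def
    have hs0 : 0 ≤ s := Real.sqrt_nonneg _
    have hs2 : s^2 = r^2 - x^2 := Real.sq_sqrt (by linarith)
    have hind : (fun y : ℝ => (if x^2 + y^2 ≤ r^2 then ENNReal.ofReal (2 * Real.sqrt (r^2 - max (x^2) (y^2))) else 0))
        = Set.indicator (Set.Icc (-s) s) (fun y => ENNReal.ofReal (2 * Real.sqrt (r^2 - max (x^2) (y^2)))) := by
      funext y
      have hiff : x^2 + y^2 ≤ r^2 ↔ y ∈ Set.Icc (-s) s := by
        rw [Set.mem_Icc, ← Real.sq_le (by linarith : (0:ℝ) ≤ r^2 - x^2)]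
        constructor <;> intro h <;> linarith
      by_cases h : x^2 + y^2 ≤ r^2
      · rw [if_pos h, Set.indicator_of_mem (hiff.mp h)]
      · rw [if_neg h, Set.indicator_of_notMem (fun hm => h (hiff.mpr hm))]
    rw [hcong, hind, lintegral_indicator measurableSet_Icc]
    have hInt : IntegrableOn (fun y : ℝ => 2 * Real.sqrt (r^2 - max (x^2) (y^2))) (Set.Icc (-s) s) :=
      (psi_cont r x).integrableOn_Icc
    rw [← ofReal_integral_eq_lintegral_ofReal hInt
        (Filter.Eventually.of_forall (fun y => by positivity))]
    have : ∫ y in Set.Icc (-s) s, 2 * Real.sqrt (r^2 - max (x^2) (y^2))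
        = ∫ y in (-s)..s, 2 * Real.sqrt (r^2 - max (x^2) (y^2)) := by
      rw [intervalIntegral.integral_of_le (by linarith), integral_Icc_eq_integral_Ioc]
    rw [this, J_eval r x hr hxr]
    refine ⟨rfl, ?_⟩
    rw [← J_eval r x hr hxr]
    apply intervalIntegral.integral_nonneg (by linarith)
    intro y hy; positivity
  · constructor
    · rw [hcong]
      have : ∀ y : ℝ, (if x^2 + y^2 ≤ r^2 then ENNReal.ofReal (2 * Real.sqrt (r^2 - max (x^2) (y^2))) else 0) = 0 := by
        intro y
        rw [if_neg (fun h => hxr (by nlinarith [sq_nonneg y]))]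
      rw [lintegral_congr this, lintegral_zero]
      have hphi : phi r x = 0 := by
        rw [phi, if_neg (fun h => hxr (by linarith [sq_nonneg r])), if_neg hxr]
      rw [hphi]; simp
    · rw [phi, if_neg (fun h => hxr (by linarith [sq_nonneg r])), if_neg hxr]


private lemma phi_nonneg (r : ℝ) (hr : 0 < r) (x : ℝ) : 0 ≤ phi r x :=
  (inner_int r hr x).2

private lemma phi_meas (r : ℝ) : Measurable (phi r) := by
  unfold phi
  apply Measurable.ite (measurableSet_le ((continuous_pow 2).measurable) measurable_const)
  · apply Continuous.measurable
    apply Continuous.sub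
    · exact (continuous_const.mul continuous_abs).mul (continuous_const.sub (continuous_pow 2)).sqrt |>.add continuous_const
    · exact continuous_const.mul (Real.continuous_arcsin.comp (continuous_abs.div_const r))
  apply Measurable.ite (measurableSet_le ((continuous_pow 2).measurable) measurable_const)
  · exact (continuous_const.mul (continuous_const.sub (continuous_pow 2))).measurable
  · exact measurable_const

set_option maxHeartbeats 1000000 in
private lemma outer (r : ℝ) (hr : 0 < r) :
    ∫⁻ x, ENNReal.ofReal (phi r x) = ENNReal.ofReal (8*(2-Real.sqrt 2)*r^3) := by
  have hmeas := phi_meas r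
  have hzero : ∀ x ∉ Set.Icc (-r) r, phi r x = 0 := by
    intro x hx
    rw [Set.mem_Icc, not_and_or] at hx
    have hx2 : ¬ x^2 ≤ r^2 := by
      rcases hx with h|h <;> push_neg at h <;> nlinarith
    rw [phi, if_neg (fun h => hx2 (by nlinarith [sq_nonneg r])), if_neg hx2]
  rw [← lintegral_add_compl (fun x => ENNReal.ofReal (phi r x)) (measurableSet_Icc (a := -r) (b := r))]
  have hcompl : ∫⁻ x in (Set.Icc (-r) r)ᶜ, ENNReal.ofReal (phi r x) = 0 := by
    rw [setLIntegral_congr_fun measurableSet_Icc.compl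
      (fun x hx => by rw [hzero x hx, ENNReal.ofReal_zero]), lintegral_zero]
  rw [hcompl, add_zero]
  have hInt : IntegrableOn (phi r) (Set.Icc (-r) r) := by
    apply Measure.integrableOn_of_bounded (M := 4*r^2 + 3*π*r^2) measure_Icc_lt_top.ne
      hmeas.aestronglyMeasurable
    apply ae_of_all
    intro x
    rw [Real.norm_eq_abs, abs_of_nonneg (phi_nonneg r hr x)]
    rw [phi]
    split_ifs with h1 h2
    · have h3 : |x| ≤ r := by
        have h := Real.sqrt_le_sqrt (show x^2 ≤ r^2 by nlinarith)
        rwa [Real.sqrt_sq_eq_abs, Real.sqrt_sq hr.le] at h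
      have hsle : Real.sqrt (r^2-x^2) ≤ r := by
        have h := Real.sqrt_le_sqrt (show r^2 - x^2 ≤ r^2 by nlinarith [sq_nonneg x])
        rwa [Real.sqrt_sq hr.le] at h
      have hprod : |x| * Real.sqrt (r^2-x^2) ≤ r * r :=
        mul_le_mul h3 hsle (Real.sqrt_nonneg _) hr.le
      have harc := Real.neg_pi_div_two_le_arcsin (|x|/r)
      nlinarith [Real.pi_pos, sq_nonneg r]
    · nlinarith [sq_nonneg x, Real.pi_pos, sq_nonneg r]
    · nlinarith [Real.pi_pos, sq_nonneg r]
  rw [← ofReal_integral_eq_lintegral_ofReal hInt (ae_of_all _ fun x => phi_nonneg r hr x)]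
  congr 1
  have h1 : ∫ x in Set.Icc (-r) r, phi r x = ∫ x in (-r)..r, phi r x := by
    rw [intervalIntegral.integral_of_le (by linarith), integral_Icc_eq_integral_Ioc]
  rw [h1]
  -- interval integrability of phi on subintervals
  have hii : ∀ a b : ℝ, -r ≤ a → b ≤ r → a ≤ b → IntervalIntegrable (phi r) volume a b := by
    intro a b ha hb hab
    apply IntegrableOn.intervalIntegrable
    apply hInt.mono_set
    rw [Set.uIcc_of_le hab]
    exact Set.Icc_subset_Icc ha hb
  set c := Real.sqrt (r^2/2) with hc_def
  have hc0 : 0 ≤ c := Real.sqrt_nonneg _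
  have hc2 : c^2 = r^2/2 := Real.sq_sqrt (by positivity)
  have hcr : c ≤ r := by
    have h := Real.sqrt_le_sqrt (show r^2/2 ≤ r^2 by nlinarith)
    rwa [Real.sqrt_sq hr.le] at h
  have hcval : c = r * Real.sqrt 2 / 2 := by
    rw [hc_def, show r^2/2 = (r * Real.sqrt 2 / 2)^2 by
      rw [div_pow, mul_pow, Real.sq_sqrt (by norm_num : (0:ℝ) ≤ 2)]; ring]
    exact Real.sqrt_sq (by positivity)
  have heven : ∀ x, phi r (-x) = phi r x := by
    intro x; simp only [phi, neg_sq, abs_neg]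
  have hsplit : ∫ x in (-r)..r, phi r x = 2 * ∫ x in (0:ℝ)..r, phi r x := by
    rw [← intervalIntegral.integral_add_adjacent_intervals (hii (-r) 0 le_rfl hr.le (by linarith))
      (hii 0 r (by linarith) le_rfl hr.le)]
    have hneg : ∫ x in (-r)..(0:ℝ), phi r x = ∫ x in (0:ℝ)..r, phi r x := by
      rw [show (-r : ℝ) = -r by rfl, show (0:ℝ) = -(0:ℝ) by norm_num,
        ← intervalIntegral.integral_comp_neg (phi r)]
      simp only [heven]
      norm_num
    rw [hneg]; ring
  rw [hsplit]
  rw [← intervalIntegral.integral_add_adjacent_intervals (hii 0 c (by linarith) hcr hc0)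
    (hii c r (by linarith) le_rfl hcr)]
  -- piece on [0,c]
  have hIc : ∫ x in (0:ℝ)..c, phi r x
      = ((-(4:ℝ)/3)*((r^2-c^2)*Real.sqrt (r^2-c^2)) + π*r^2*c
          - 4*r^2*(c*Real.arcsin (c/r) + Real.sqrt (r^2-c^2)))
        - ((-(4:ℝ)/3)*((r^2-0^2)*Real.sqrt (r^2-0^2)) + π*r^2*0
          - 4*r^2*(0*Real.arcsin (0/r) + Real.sqrt (r^2-0^2))) := by
    have hcong : Set.EqOn (phi r)
        (fun x => 4*x*Real.sqrt (r^2-x^2) + π*r^2 - 4*r^2*Real.arcsin (x/r)) (Set.uIcc 0 c) := by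
      intro x hx
      rw [Set.uIcc_of_le hc0] at hx
      have hx0 : 0 ≤ x := hx.1
      have hxc : x ≤ c := hx.2
      rw [phi, if_pos (by nlinarith), abs_of_nonneg hx0]
    rw [intervalIntegral.integral_congr hcong]
    apply intervalIntegral.integral_eq_sub_of_hasDerivAt
      (f := fun x => (-(4:ℝ)/3)*((r^2-x^2)*Real.sqrt (r^2-x^2)) + π*r^2*x
        - 4*r^2*(x*Real.arcsin (x/r) + Real.sqrt (r^2-x^2)))
    · intro x hx
      rw [Set.uIcc_of_le hc0] at hx
      exact hasDerivAt_A r x hr (by nlinarith [hx.1, hx.2])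
    · apply Continuous.intervalIntegrable
      apply Continuous.sub
      · exact ((continuous_const.mul continuous_id).mul (continuous_const.sub (continuous_pow 2)).sqrt).add continuous_const
      · exact continuous_const.mul (Real.continuous_arcsin.comp (continuous_id.div_const r))
  -- piece on [c,r]
  have hB : ∀ x : ℝ, HasDerivAt (fun x : ℝ => 4*(r^2*x - x^3/3)) (4*(r^2-x^2)) x := by
    intro x
    have h := (((hasDerivAt_id x).const_mul (r^2)).sub ((hasDerivAt_pow 3 x).div_const 3)).const_mul 4
    refine h.congr_deriv (Eq.symm ?_)
    push_cast
    ring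
  have hcr2 : Real.sqrt (r^2 - c^2) = c := by
    rw [hc2, show r^2 - r^2/2 = r^2/2 by ring, hc_def]
  have harcc : Real.arcsin (c/r) = π/4 := by
    rw [hcval, show r * Real.sqrt 2 / 2 / r = Real.sqrt 2 / 2 by field_simp]
    exact arcsin_sqrt2
  have hIr : ∫ x in c..r, phi r x = (4*(r^2*r - r^3/3)) - (4*(r^2*c - c^3/3)) := by
    have hcong : Set.EqOn (phi r) (fun x => 4*(r^2-x^2)) (Set.uIcc c r) := by
      intro x hx
      rw [Set.uIcc_of_le hcr] at hx
      by_cases h : x^2 ≤ r^2/2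
      · have hxc : x = c := by nlinarith [hx.1, hx.2]
        subst hxc
        rw [phi, if_pos h, abs_of_nonneg hc0, hcr2, harcc]
        simp only
        nlinarith [hc2]
      · rw [phi, if_neg h, if_pos (by nlinarith [hx.1, hx.2])]
    rw [intervalIntegral.integral_congr hcong]
    apply intervalIntegral.integral_eq_sub_of_hasDerivAt (f := fun x : ℝ => 4*(r^2*x - x^3/3))
    · intro x _; exact hB x
    · exact (continuous_const.mul (continuous_const.sub (continuous_pow 2))).intervalIntegrable c r
  rw [hIc, hIr, hcr2, harcc]
  have h0 : Real.sqrt (r^2 - 0^2) = r := by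
    rw [show r^2 - 0^2 = r^2 by ring, Real.sqrt_sq hr.le]
  rw [h0, hcval]
  have hsq2 : Real.sqrt 2 ^ 2 = 2 := Real.sq_sqrt (by norm_num)
  linear_combination ((2:ℝ)/3 * r^3 * Real.sqrt 2) * hsq2

/-- The intersection of three mutually perpendicular solid cylinders of radius r
(axes along the coordinate axes) has volume 8(2−√2)r³. -/

theorem steinmetz_three_cylinders (r : ℝ) (hr : 0 < r) :
    volume {p : Fin 3 → ℝ | p 0 ^ 2 + p 1 ^ 2 ≤ r ^ 2 ∧ p 1 ^ 2 + p 2 ^ 2 ≤ r ^ 2 ∧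
        p 0 ^ 2 + p 2 ^ 2 ≤ r ^ 2}
      = ENNReal.ofReal (8 * (2 - Real.sqrt 2) * r ^ 3) := by
  set S3 : Set (ℝ × ℝ × ℝ) :=
    {q | q.1^2 + q.2.1^2 ≤ r^2 ∧ q.2.1^2 + q.2.2^2 ≤ r^2 ∧ q.1^2 + q.2.2^2 ≤ r^2} with hS3
  have hS3m : MeasurableSet S3 := by
    apply MeasurableSet.inter
    · exact measurableSet_le (((continuous_fst.pow 2).add
        ((continuous_fst.comp continuous_snd).pow 2)).measurable) measurable_const
    apply MeasurableSet.inter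
    · exact measurableSet_le ((((continuous_fst.comp continuous_snd).pow 2).add
        ((continuous_snd.comp continuous_snd).pow 2)).measurable) measurable_const
    · exact measurableSet_le (((continuous_fst.pow 2).add
        ((continuous_snd.comp continuous_snd).pow 2)).measurable) measurable_const
  have e1 := MeasureTheory.volume_preserving_piFinSuccAbove (fun _ : Fin 3 => ℝ) 0
  have e2 := MeasureTheory.volume_preserving_finTwoArrow ℝ
  have ecomp : MeasurePreserving
      (fun p : Fin 3 → ℝ => (Prod.map (id : ℝ → ℝ) (MeasurableEquiv.finTwoArrow))
        ((MeasurableEquiv.piFinSuccAbove (fun _ : Fin 3 => ℝ) 0) p)) volume volume :=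
    ((MeasurePreserving.id volume).prod e2).comp e1
  have hpre : (fun p : Fin 3 → ℝ => (Prod.map (id : ℝ → ℝ) (MeasurableEquiv.finTwoArrow))
        ((MeasurableEquiv.piFinSuccAbove (fun _ : Fin 3 => ℝ) 0) p)) ⁻¹' S3
      = {p : Fin 3 → ℝ | p 0 ^ 2 + p 1 ^ 2 ≤ r ^ 2 ∧ p 1 ^ 2 + p 2 ^ 2 ≤ r ^ 2 ∧
          p 0 ^ 2 + p 2 ^ 2 ≤ r ^ 2} := by
    ext p
    simp [hS3, MeasurableEquiv.piFinSuccAbove, MeasurableEquiv.finTwoArrow,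
      Fin.succAbove, Fin.isValue, Fin.tail]
  rw [← hpre, ecomp.measure_preimage hS3m.nullMeasurableSet]
  rw [Measure.volume_eq_prod, Measure.prod_apply hS3m]
  have hslice : ∀ x : ℝ, (volume : Measure (ℝ × ℝ)) (Prod.mk x ⁻¹' S3)
      = ∫⁻ y, volume {z : ℝ | x^2+y^2 ≤ r^2 ∧ y^2+z^2 ≤ r^2 ∧ x^2+z^2 ≤ r^2} := by
    intro x
    have hm : MeasurableSet (Prod.mk x ⁻¹' S3) := hS3m.preimage (measurable_prodMk_left)
    rw [Measure.volume_eq_prod, Measure.prod_apply hm]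
    rfl
  calc ∫⁻ x, (volume : Measure (ℝ × ℝ)) (Prod.mk x ⁻¹' S3)
      = ∫⁻ x, ENNReal.ofReal (phi r x) :=
        lintegral_congr (fun x => (hslice x).trans (inner_int r hr x).1)
    _ = ENNReal.ofReal (8 * (2 - Real.sqrt 2) * r ^ 3) := outer r hr
end

section
/- Morley's trisector theorem: in any triangle, the three points of intersection of adjacent angle trisectors form an equilateral triangle. -/
open EuclideanGeometry Real

noncomputable section

namespace MorleyAux

local notation "Pt" => EuclideanSpace ℝ (Fin 2)

instance : Fact (Module.finrank ℝ (EuclideanSpace ℝ (Fin 2)) = 2) := ⟨finrank_euclideanSpace_fin⟩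
instance : Module.Oriented ℝ (EuclideanSpace ℝ (Fin 2)) (Fin 2) :=
  ⟨Module.Basis.orientation (EuclideanSpace.basisFun (Fin 2) ℝ).toBasis⟩

/-! ### Trigonometric identities -/

lemma sin_prod (θ : ℝ) :
    Real.sin (π/3 + θ) * Real.sin (π/3 - θ) = 3/4 - Real.sin θ ^ 2 := by
  rw [Real.sin_add, Real.sin_sub, Real.sin_pi_div_three, Real.cos_pi_div_three]
  have h3 : Real.sqrt 3 ^ 2 = 3 := Real.sq_sqrt (by norm_num)
  nlinarith [Real.sin_sq_add_cos_sq θ]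

lemma sin_three' (θ : ℝ) :
    Real.sin (3*θ) = 4 * Real.sin θ * (Real.sin (π/3 + θ) * Real.sin (π/3 - θ)) := by
  rw [Real.sin_three_mul, sin_prod]; ring

lemma sin_sq_tri (s t : ℝ) :
    Real.sin s ^ 2 + Real.sin t ^ 2 + 2 * Real.sin s * Real.sin t * Real.cos (s + t)
      = Real.sin (s + t) ^ 2 := by
  rw [Real.sin_add, Real.cos_add]
  nlinarith [Real.sin_sq_add_cos_sq s, Real.sin_sq_add_cos_sq t]

lemma cancel_len {AR k sb sg spg smg : ℝ} (hsmg : smg ≠ 0)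
    (h1 : AR * smg = k * (4 * sg * (spg * smg)) * sb) :
    AR = 4 * k * sb * sg * spg := by
  apply mul_right_cancel₀ hsmg
  linear_combination h1

/-! ### The law-of-sines-type area relation -/

section SinDist

variable {V : Type*} [NormedAddCommGroup V] [InnerProductSpace ℝ V]

open InnerProductGeometry in
lemma sin_vec (u v : V) :
    Real.sin (InnerProductGeometry.angle u v) * (‖u‖ * ‖v‖)
      = Real.sin (InnerProductGeometry.angle (-v) (u - v)) * (‖-v‖ * ‖u - v‖) := by
  rw [sin_angle_mul_norm_mul_norm, sin_angle_mul_norm_mul_norm]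
  congr 1
  simp only [inner_neg_left, inner_neg_neg, inner_sub_left, inner_sub_right, inner_neg_right,
    real_inner_comm v u]
  ring

variable {P : Type*} [MetricSpace P] [NormedAddTorsor V P]

lemma sin_dist (p₁ p₂ p₃ : P) :
    Real.sin (∠ p₁ p₂ p₃) * (dist p₁ p₂ * dist p₃ p₂)
      = Real.sin (∠ p₂ p₃ p₁) * (dist p₂ p₃ * dist p₁ p₃) := by
  have h := sin_vec (p₁ -ᵥ p₂ : V) (p₃ -ᵥ p₂)
  rw [neg_vsub_eq_vsub_rev, vsub_sub_vsub_cancel_right] at h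
  simpa only [EuclideanGeometry.angle, dist_eq_norm_vsub V] using h

/-- Law of sines in the form needed: in triangle `A B X` with angle `a` at `A` and `b` at `B`. -/
lemma side {A B X : P} (hXA : X ≠ A) (hXB : X ≠ B) {a b : ℝ}
    (hA : ∠ X A B = a) (hB : ∠ X B A = b) :
    dist A X * Real.sin (a + b) = dist A B * Real.sin b := by
  have hsum := EuclideanGeometry.angle_add_angle_add_angle_eq_pi (p₁ := X) (p₂ := A) B
    hXA.symm
  rw [hA, angle_comm A B X, hB] at hsum
  have hX : ∠ A X B = π - (a + b) := by rw [angle_comm]; linarith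
  have h := sin_dist (V := V) A X B
  rw [hX, hB, Real.sin_pi_sub, dist_comm X B] at h
  have hBX : dist B X ≠ 0 := dist_ne_zero.2 hXB.symm
  have h2 : Real.sin (a+b) * dist A X * dist B X = dist A B * Real.sin b * dist B X := by
    linear_combination h
  have := mul_right_cancel₀ hBX h2
  linarith

end SinDist

/-! ### Interior of the triangle -/

lemma interior_facts {A B C X : Pt} (hABC : AffineIndependent ℝ ![A, B, C])
    (hX : X ∈ interior (convexHull ℝ ({A, B, C} : Set Pt))) :
    X ≠ A ∧ X ≠ B ∧ X ≠ C ∧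
      ∃ x1 x2 : ℝ, 0 < x1 ∧ 0 < x2 ∧ X - A = x1 • (B - A) + x2 • (C - A) := by
  have htop : affineSpan ℝ (Set.range ![A, B, C]) = ⊤ := by
    rw [hABC.affineSpan_eq_top_iff_card_eq_finrank_add_one]
    simp [finrank_euclideanSpace_fin]
  let b : AffineBasis (Fin 3) ℝ Pt := ⟨![A, B, C], hABC, htop⟩
  have hrange : Set.range (b : Fin 3 → Pt) = ({A, B, C} : Set Pt) := by
    show Set.range ![A, B, C] = _
    ext x
    simp [Fin.exists_fin_succ, Matrix.cons_val_zero, Matrix.cons_val_one]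
    tauto
  rw [← hrange, b.interior_convexHull] at hX
  have h0 := hX 0
  have h1 := hX 1
  have h2 := hX 2
  have hbA : b 0 = A := rfl
  have hbB : b 1 = B := rfl
  have hbC : b 2 = C := rfl
  have hXA : X ≠ A := by
    rintro rfl
    rw [← hbA, b.coord_apply_ne (by decide)] at h1
    exact lt_irrefl 0 h1
  have hXB : X ≠ B := by
    rintro rfl
    rw [← hbB, b.coord_apply_ne (by decide)] at h0
    exact lt_irrefl 0 h0
  have hXC : X ≠ C := by
    rintro rfl
    rw [← hbC, b.coord_apply_ne (by decide)] at h0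
    exact lt_irrefl 0 h0
  set w0 := b.coord 0 X with hw0
  set w1 := b.coord 1 X with hw1
  set w2 := b.coord 2 X with hw2
  refine ⟨hXA, hXB, hXC, w1, w2, h1, h2, ?_⟩
  have hsum : w0 + w1 + w2 = 1 := by
    have := b.sum_coord_apply_eq_one X
    rwa [Fin.sum_univ_three, ← hw0, ← hw1, ← hw2] at this
  have hrep : w0 • A + w1 • B + w2 • C = X := by
    have := b.linear_combination_coord_eq_self X
    rwa [Fin.sum_univ_three, hbA, hbB, hbC, ← hw0, ← hw1, ← hw2] at this
  have h0' : w0 = 1 - w1 - w2 := by linarith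
  rw [← hrep, h0']
  module

/-! ### The middle trisector angle -/

lemma middle {A B C X Y : Pt} (hABC : AffineIndependent ℝ ![A, B, C])
    (hX : X ∈ interior (convexHull ℝ ({A, B, C} : Set Pt)))
    (hY : Y ∈ interior (convexHull ℝ ({A, B, C} : Set Pt)))
    (hXA : ∠ X A B = ∠ C A B / 3) (hYA : ∠ Y A C = ∠ B A C / 3) :
    ∠ X A Y = ∠ B A C / 3 := by
  obtain ⟨hXAne, hXBne, hXCne, x1, x2, hx1, hx2, hXd⟩ := interior_facts hABC hX
  obtain ⟨hYAne, hYBne, hYCne, y1, y2, hy1, hy2, hYd⟩ := interior_facts hABC hY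
  have hnc : ¬Collinear ℝ ({A, B, C} : Set Pt) := affineIndependent_iff_not_collinear_set.1 hABC
  have hncBAC : ¬Collinear ℝ ({B, A, C} : Set Pt) := by rwa [Set.insert_comm] at hnc
  have hBA : B ≠ A := by
    rintro rfl
    exact hnc (by
      have : ({B, B, C} : Set Pt) = {B, C} := by simp
      rw [this]; exact collinear_pair ℝ B C)
  have hCA : C ≠ A := by
    rintro rfl
    exact hnc (by
      have : ({C, B, C} : Set Pt) = {B, C} := by rw [Set.insert_comm]; simp
      rw [this]; exact collinear_pair ℝ B C)
  have hXv : X -ᵥ A = x1 • (B -ᵥ A) + x2 • (C -ᵥ A) := by simpa [vsub_eq_sub] using hXd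
  have hYv : Y -ᵥ A = y1 • (B -ᵥ A) + y2 • (C -ᵥ A) := by simpa [vsub_eq_sub] using hYd
  have hsX : (∡ B A X).sign = (∡ B A C).sign := by
    unfold EuclideanGeometry.oangle
    rw [hXv, Orientation.oangle_sign_smul_add_right,
      Orientation.oangle_smul_right_of_pos _ _ _ hx2]
  have hsY : (∡ Y A C).sign = (∡ B A C).sign := by
    unfold EuclideanGeometry.oangle
    rw [hYv, Orientation.oangle_sign_add_smul_left,
      Orientation.oangle_smul_left_of_pos _ _ _ hy1]
  set α := ∠ B A C / 3 with hαdef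
  have hXang : ∠ B A X = α := by rw [angle_comm B A X, hXA, angle_comm C A B]
  have hYang : ∠ Y A C = α := hYA
  have h0 : 0 < ∠ B A C := EuclideanGeometry.angle_pos_of_not_collinear hncBAC
  have hlt : ∠ B A C < π := EuclideanGeometry.angle_lt_pi_of_not_collinear hncBAC
  have hα0 : 0 < α := by rw [hαdef]; linarith
  have hαπ : α < π := by rw [hαdef]; linarith [Real.pi_pos]
  have hadd : ∡ B A X + ∡ X A Y + ∡ Y A C = ∡ B A C := by
    rw [EuclideanGeometry.oangle_add hBA hXAne hYAne,
      EuclideanGeometry.oangle_add hBA hYAne hCA]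
  have hsnz : (∡ B A C).sign ≠ 0 := by
    exact fun h => hncBAC (EuclideanGeometry.oangle_sign_eq_zero_iff_collinear.1 h)
  have h' : ∡ X A Y = ∡ B A C - ∡ B A X - ∡ Y A C := by rw [← hadd]; abel
  cases hsgn : (∡ B A C).sign with
  | zero => exact absurd hsgn hsnz
  | pos =>
    have h1 : (∡ B A C).sign = 1 := by rw [hsgn]; rfl
    have e1 : ∡ B A X = ((α : ℝ) : Real.Angle) := by
      rw [EuclideanGeometry.oangle_eq_angle_of_sign_eq_one (hsX.trans h1), hXang]
    have e3 : ∡ Y A C = ((α : ℝ) : Real.Angle) := by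
      rw [EuclideanGeometry.oangle_eq_angle_of_sign_eq_one (hsY.trans h1), hYang]
    have eθ : ∡ B A C = ((3 * α : ℝ) : Real.Angle) := by
      rw [EuclideanGeometry.oangle_eq_angle_of_sign_eq_one h1]
      congr 1
      rw [hαdef]; ring
    have e2 : ∡ X A Y = ((α : ℝ) : Real.Angle) := by
      rw [h', eθ, e1, e3, ← Real.Angle.coe_sub, ← Real.Angle.coe_sub]
      congr 1; ring
    rw [EuclideanGeometry.angle_eq_abs_oangle_toReal hXAne hYAne, e2,
      Real.Angle.toReal_coe_eq_self_iff.2 ⟨by linarith [Real.pi_pos], by linarith⟩,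
      abs_of_pos hα0]
  | neg =>
    have h1 : (∡ B A C).sign = -1 := by rw [hsgn]; rfl
    have e1 : ∡ B A X = ((-α : ℝ) : Real.Angle) := by
      rw [EuclideanGeometry.oangle_eq_neg_angle_of_sign_eq_neg_one (hsX.trans h1), hXang,
        Real.Angle.coe_neg]
    have e3 : ∡ Y A C = ((-α : ℝ) : Real.Angle) := by
      rw [EuclideanGeometry.oangle_eq_neg_angle_of_sign_eq_neg_one (hsY.trans h1), hYang,
        Real.Angle.coe_neg]
    have eθ : ∡ B A C = ((-(3 * α) : ℝ) : Real.Angle) := by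
      rw [EuclideanGeometry.oangle_eq_neg_angle_of_sign_eq_neg_one h1, Real.Angle.coe_neg]
      congr 2
      rw [hαdef]; ring
    have e2 : ∡ X A Y = ((-α : ℝ) : Real.Angle) := by
      rw [h', eθ, e1, e3, ← Real.Angle.coe_sub, ← Real.Angle.coe_sub]
      congr 1; ring
    rw [EuclideanGeometry.angle_eq_abs_oangle_toReal hXAne hYAne, e2,
      Real.Angle.toReal_coe_eq_self_iff.2 ⟨by linarith [Real.pi_pos], by linarith [Real.pi_pos]⟩,
      abs_neg, abs_of_pos hα0]

end MorleyAux

open MorleyAux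

set_option maxHeartbeats 1000000 in
/-- Morley's trisector theorem: in any triangle ABC, the three intersection points of
adjacent angle trisectors (P for side BC, Q for side CA, R for side AB, each inside the
triangle and on the trisectors nearest the corresponding side) form an equilateral triangle. -/
theorem morley_trisector (A B C P Q R : EuclideanSpace ℝ (Fin 2))
    (hABC : AffineIndependent ℝ ![A, B, C])
    (hP : P ∈ interior (convexHull ℝ ({A, B, C} : Set (EuclideanSpace ℝ (Fin 2)))))
    (hPB : ∠ P B C = ∠ A B C / 3) (hPC : ∠ P C B = ∠ A C B / 3)
    (hQ : Q ∈ interior (convexHull ℝ ({A, B, C} : Set (EuclideanSpace ℝ (Fin 2)))))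
    (hQC : ∠ Q C A = ∠ B C A / 3) (hQA : ∠ Q A C = ∠ B A C / 3)
    (hR : R ∈ interior (convexHull ℝ ({A, B, C} : Set (EuclideanSpace ℝ (Fin 2)))))
    (hRA : ∠ R A B = ∠ C A B / 3) (hRB : ∠ R B A = ∠ C B A / 3) :
    dist P Q = dist Q R ∧ dist Q R = dist R P := by
  -- collinearity and distinctness facts
  have hnc : ¬Collinear ℝ ({A, B, C} : Set (EuclideanSpace ℝ (Fin 2))) := affineIndependent_iff_not_collinear_set.1 hABC
  have hsetB : ({B, A, C} : Set (EuclideanSpace ℝ (Fin 2))) = {A, B, C} := Set.insert_comm B A {C}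
  have hsetC : ({C, B, A} : Set (EuclideanSpace ℝ (Fin 2))) = {A, B, C} := by ext x; simp; tauto
  have hsetBCA : ({B, C, A} : Set (EuclideanSpace ℝ (Fin 2))) = {A, B, C} := by ext x; simp; tauto
  have hncB : ¬Collinear ℝ ({B, A, C} : Set (EuclideanSpace ℝ (Fin 2))) := by rwa [hsetB]
  have hncC : ¬Collinear ℝ ({C, B, A} : Set (EuclideanSpace ℝ (Fin 2))) := by rwa [hsetC]
  have hncBCA : ¬Collinear ℝ ({B, C, A} : Set (EuclideanSpace ℝ (Fin 2))) := by rwa [hsetBCA]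
  have hBA : B ≠ A := by
    rintro rfl
    exact hnc (by
      have : ({B, B, C} : Set (EuclideanSpace ℝ (Fin 2))) = {B, C} := by simp
      rw [this]; exact collinear_pair ℝ B C)
  have hCA : C ≠ A := by
    rintro rfl
    exact hnc (by
      have : ({C, B, C} : Set (EuclideanSpace ℝ (Fin 2))) = {B, C} := by rw [Set.insert_comm]; simp
      rw [this]; exact collinear_pair ℝ B C)
  have hCB : C ≠ B := by
    rintro rfl
    exact hnc (by
      have : ({A, C, C} : Set (EuclideanSpace ℝ (Fin 2))) = {A, C} := by simp
      rw [this]; exact collinear_pair ℝ A C)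
  -- trisected angles
  set α := ∠ B A C / 3 with hα
  set β := ∠ A B C / 3 with hβ
  set γ := ∠ B C A / 3 with hγ
  have hA3 : ∠ B A C = 3 * α := by rw [hα]; ring
  have hB3 : ∠ A B C = 3 * β := by rw [hβ]; ring
  have hC3 : ∠ B C A = 3 * γ := by rw [hγ]; ring
  have hApos : 0 < ∠ B A C := EuclideanGeometry.angle_pos_of_not_collinear hncB
  have hAlt : ∠ B A C < π := EuclideanGeometry.angle_lt_pi_of_not_collinear hncB
  have hBpos : 0 < ∠ A B C := EuclideanGeometry.angle_pos_of_not_collinear hnc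
  have hBlt : ∠ A B C < π := EuclideanGeometry.angle_lt_pi_of_not_collinear hnc
  have hCpos : 0 < ∠ B C A := EuclideanGeometry.angle_pos_of_not_collinear hncBCA
  have hClt : ∠ B C A < π := EuclideanGeometry.angle_lt_pi_of_not_collinear hncBCA
  have hsum := EuclideanGeometry.angle_add_angle_add_angle_eq_pi (p₁ := A) (p₂ := B) C
    hBA
  have hCAB : ∠ C A B = ∠ B A C := angle_comm _ _ _
  have habc : α + β + γ = π / 3 := by
    rw [hCAB, hA3, hB3, hC3] at hsum; linarith
  have hα0 : 0 < α := by rw [hα]; linarith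
  have hβ0 : 0 < β := by rw [hβ]; linarith
  have hγ0 : 0 < γ := by rw [hγ]; linarith
  have hαlt : α < π / 3 := by linarith
  have hβlt : β < π / 3 := by linarith
  have hγlt : γ < π / 3 := by linarith
  -- distinctness of the trisector points from the vertices
  obtain ⟨hPA, hPB', hPC', -⟩ := interior_facts hABC hP
  obtain ⟨hQA', hQB', hQC', -⟩ := interior_facts hABC hQ
  obtain ⟨hRA', hRB', hRC', -⟩ := interior_facts hABC hR
  -- the six trisector angles in convenient form
  have aRA : ∠ R A B = α := by rw [hRA, hCAB]
  have aRB : ∠ R B A = β := by rw [hRB, angle_comm C B A]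
  have aQA : ∠ Q A C = α := hQA
  have aQC : ∠ Q C A = γ := hQC
  have aPB : ∠ P B C = β := hPB
  have aPC : ∠ P C B = γ := by rw [hPC, angle_comm A C B]
  -- law of sines in the six small triangles
  have e1 : dist A R * Real.sin (α + β) = dist A B * Real.sin β := side hRA' hRB' aRA aRB
  have e2 : dist A Q * Real.sin (α + γ) = dist A C * Real.sin γ := side hQA' hQC' aQA aQC
  have e3 : dist B R * Real.sin (β + α) = dist B A * Real.sin α := side hRB' hRA' aRB aRA
  have e4 : dist B P * Real.sin (β + γ) = dist B C * Real.sin γ := side hPB' hPC' aPB aPC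
  have e5 : dist C P * Real.sin (γ + β) = dist C B * Real.sin β := side hPC' hPB' aPC aPB
  have e6 : dist C Q * Real.sin (γ + α) = dist C A * Real.sin α := side hQC' hQA' aQC aQA
  -- law of sines in the big triangle
  have hABpos : (0:ℝ) < dist A B := dist_pos.2 hBA.symm
  have hACpos : (0:ℝ) < dist A C := dist_pos.2 hCA.symm
  have hBCpos : (0:ℝ) < dist B C := dist_pos.2 hCB.symm
  have hs3α : 0 < Real.sin (3 * α) := by
    rw [← hA3]; exact Real.sin_pos_of_pos_of_lt_pi hApos hAlt
  have hs3β : 0 < Real.sin (3 * β) := by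
    rw [← hB3]; exact Real.sin_pos_of_pos_of_lt_pi hBpos hBlt
  have hs3γ : 0 < Real.sin (3 * γ) := by
    rw [← hC3]; exact Real.sin_pos_of_pos_of_lt_pi hCpos hClt
  set k := dist B C / Real.sin (3 * α) with hk
  have hkpos : 0 < k := div_pos hBCpos hs3α
  have hS1 := sin_dist (V := EuclideanSpace ℝ (Fin 2)) C A B
  rw [hCAB, hA3, hB3, dist_comm C A, dist_comm B A, dist_comm C B] at hS1
  -- hS1 : sin (3α) * (dist A C * dist A B) = sin (3β) * (dist A B * dist B C)
  have g1 : Real.sin (3*α) * dist A C = Real.sin (3*β) * dist B C :=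
    mul_right_cancel₀ hABpos.ne' (by linear_combination hS1)
  have hb : dist A C = k * Real.sin (3 * β) := by
    rw [hk]; field_simp; linear_combination g1
  have hS2 := sin_dist (V := EuclideanSpace ℝ (Fin 2)) A B C
  rw [hB3, hC3, dist_comm C B] at hS2
  -- hS2 : sin (3β) * (dist A B * dist B C) = sin (3γ) * (dist B C * dist A C)
  have g2 : Real.sin (3*β) * dist A B = Real.sin (3*γ) * dist A C :=
    mul_right_cancel₀ hBCpos.ne' (by linear_combination hS2)
  have g3 : Real.sin (3*α) * dist A B = Real.sin (3*γ) * dist B C :=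
    mul_right_cancel₀ (mul_pos hs3β hACpos).ne'
      (by linear_combination (Real.sin (3*β) * dist A B) * g1 + (Real.sin (3*β) * dist B C) * g2)
  have hc : dist A B = k * Real.sin (3 * γ) := by
    rw [hk]; field_simp; linear_combination g3
  have ha : dist B C = k * Real.sin (3 * α) := by rw [hk]; field_simp
  -- the three pairwise-sum sines
  have hmα : 0 < Real.sin (π/3 - α) :=
    Real.sin_pos_of_pos_of_lt_pi (by linarith) (by linarith [Real.pi_pos])
  have hmβ : 0 < Real.sin (π/3 - β) :=
    Real.sin_pos_of_pos_of_lt_pi (by linarith) (by linarith [Real.pi_pos])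
  have hmγ : 0 < Real.sin (π/3 - γ) :=
    Real.sin_pos_of_pos_of_lt_pi (by linarith) (by linarith [Real.pi_pos])
  -- closed forms for the six distances
  have hAR : dist A R = 4 * k * Real.sin β * Real.sin γ * Real.sin (π/3 + γ) := by
    refine cancel_len hmγ.ne' ?_
    rw [← sin_three' γ, ← hc, show π/3 - γ = α + β by linarith]; exact e1
  have hAQ : dist A Q = 4 * k * Real.sin γ * Real.sin β * Real.sin (π/3 + β) := by
    refine cancel_len hmβ.ne' ?_
    rw [← sin_three' β, ← hb, show π/3 - β = α + γ by linarith]; exact e2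
  have hBR : dist B R = 4 * k * Real.sin α * Real.sin γ * Real.sin (π/3 + γ) := by
    refine cancel_len hmγ.ne' ?_
    rw [← sin_three' γ, ← hc, dist_comm A B, show π/3 - γ = β + α by linarith]; exact e3
  have hBP : dist B P = 4 * k * Real.sin γ * Real.sin α * Real.sin (π/3 + α) := by
    refine cancel_len hmα.ne' ?_
    rw [← sin_three' α, ← ha, show π/3 - α = β + γ by linarith]; exact e4
  have hCP : dist C P = 4 * k * Real.sin β * Real.sin α * Real.sin (π/3 + α) := by
    refine cancel_len hmα.ne' ?_
    rw [← sin_three' α, ← ha, dist_comm B C, show π/3 - α = γ + β by linarith]; exact e5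
  have hCQ : dist C Q = 4 * k * Real.sin α * Real.sin β * Real.sin (π/3 + β) := by
    refine cancel_len hmβ.ne' ?_
    rw [← sin_three' β, ← hb, dist_comm A C, show π/3 - β = γ + α by linarith]; exact e6
  -- middle trisector angles
  have m1 : ∠ R A Q = α := middle hABC hR hQ hRA hQA
  have hABC_B : AffineIndependent ℝ ![B, A, C] :=
    affineIndependent_iff_not_collinear_set.2 hncB
  have hABC_C : AffineIndependent ℝ ![C, B, A] :=
    affineIndependent_iff_not_collinear_set.2 hncC
  have hR_B : R ∈ interior (convexHull ℝ ({B, A, C} : Set (EuclideanSpace ℝ (Fin 2)))) := by rwa [hsetB]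
  have hP_B : P ∈ interior (convexHull ℝ ({B, A, C} : Set (EuclideanSpace ℝ (Fin 2)))) := by rwa [hsetB]
  have hP_C : P ∈ interior (convexHull ℝ ({C, B, A} : Set (EuclideanSpace ℝ (Fin 2)))) := by rwa [hsetC]
  have hQ_C : Q ∈ interior (convexHull ℝ ({C, B, A} : Set (EuclideanSpace ℝ (Fin 2)))) := by rwa [hsetC]
  have m2 : ∠ R B P = β := middle hABC_B hR_B hP_B hRB hPB
  have m3 : ∠ P C Q = γ := middle hABC_C hP_C hQ_C hPC hQC
  -- law of cosines in the three corner triangles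
  have f1 := EuclideanGeometry.law_cos Q A R
  rw [angle_comm Q A R, m1, dist_comm Q A, dist_comm R A] at f1
  have f2 := EuclideanGeometry.law_cos R B P
  rw [angle_comm R B P, angle_comm P B R, m2, dist_comm R B, dist_comm P B] at f2
  have f3 := EuclideanGeometry.law_cos P C Q
  rw [angle_comm P C Q, angle_comm Q C P, m3, dist_comm P C, dist_comm Q C] at f3
  -- the key trigonometric identity at each corner
  have hid : ∀ x y z : ℝ, x + y + z = π/3 →
      Real.sin (π/3 + y) ^ 2 + Real.sin (π/3 + z) ^ 2
        - 2 * Real.sin (π/3 + y) * Real.sin (π/3 + z) * Real.cos x = Real.sin x ^ 2 := by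
    intro x y z hxyz
    have h := sin_sq_tri (π/3 + y) (π/3 + z)
    rw [show (π/3 + y) + (π/3 + z) = π - x by linarith, Real.cos_pi_sub, Real.sin_pi_sub] at h
    linear_combination h
  have hidA := hid α β γ habc
  have hidB := hid β γ α (by linarith)
  have hidC := hid γ α β (by linarith)
  -- squared side lengths of the Morley triangle
  have hQR2 : dist Q R * dist Q R
      = 16 * k^2 * Real.sin α ^2 * Real.sin β ^2 * Real.sin γ ^2 := by
    rw [f1, hAQ, hAR]
    linear_combination (16 * k^2 * Real.sin β ^2 * Real.sin γ ^2) * hidA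
  have hRP2 : dist R P * dist R P
      = 16 * k^2 * Real.sin α ^2 * Real.sin β ^2 * Real.sin γ ^2 := by
    rw [f2, hBR, hBP]
    linear_combination (16 * k^2 * Real.sin γ ^2 * Real.sin α ^2) * hidB
  have hPQ2 : dist P Q * dist P Q
      = 16 * k^2 * Real.sin α ^2 * Real.sin β ^2 * Real.sin γ ^2 := by
    rw [f3, hCP, hCQ]
    linear_combination (16 * k^2 * Real.sin α ^2 * Real.sin β ^2) * hidC
  constructor
  · exact (mul_self_inj dist_nonneg dist_nonneg).1 (hPQ2.trans hQR2.symm)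
  · exact (mul_self_inj dist_nonneg dist_nonneg).1 (hQR2.trans hRP2.symm)
end
end

section
/- Nine-point circle (Feuerbach) theorem: for any triangle, the midpoints of the three sides, the feet of the three altitudes, and the midpoints of the segments from the orthocenter to each vertex all lie on a single circle. -/
open EuclideanGeometry

open InnerProductSpace in
/-- If `X` sees the segment `PQ` at a right angle, then `X` is as far from the midpoint of
`PQ` as `P` is. -/
lemma nine_aux_diameter {V : Type*} [NormedAddCommGroup V] [InnerProductSpace ℝ V]
    (P Q X : V) (h : ⟪P - X, Q - X⟫_ℝ = 0) :
    dist (midpoint ℝ P Q) X = dist (midpoint ℝ P Q) P := by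
  rw [dist_eq_norm, dist_eq_norm]
  apply (real_inner_add_sub_eq_zero_iff _ _).mp
  have e1 : (midpoint ℝ P Q - X) + (midpoint ℝ P Q - P) = Q - X := by
    simp only [midpoint_eq_smul_add, invOf_eq_inv]
    module
  have e2 : (midpoint ℝ P Q - X) - (midpoint ℝ P Q - P) = P - X := by abel
  rw [e1, e2, real_inner_comm, h]

open InnerProductSpace in
/-- Nine-point circle (Feuerbach) theorem: for a triangle ABC with orthocenter H, the
midpoints of the three sides, the feet of the three altitudes, and the midpoints of the
segments from H to each vertex all lie on one circle. -/
theorem nine_point_circle (A B C H FA FB FC : EuclideanSpace ℝ (Fin 2))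
    (hABC : AffineIndependent ℝ ![A, B, C])
    (hH1 : inner ℝ (H - A) (C - B) = (0 : ℝ))
    (hH2 : inner ℝ (H - B) (A - C) = (0 : ℝ))
    (hFA : FA ∈ affineSpan ℝ ({B, C} : Set (EuclideanSpace ℝ (Fin 2))) ∧
      inner ℝ (A - FA) (C - B) = (0 : ℝ))
    (hFB : FB ∈ affineSpan ℝ ({C, A} : Set (EuclideanSpace ℝ (Fin 2))) ∧
      inner ℝ (B - FB) (A - C) = (0 : ℝ))
    (hFC : FC ∈ affineSpan ℝ ({A, B} : Set (EuclideanSpace ℝ (Fin 2))) ∧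
      inner ℝ (C - FC) (B - A) = (0 : ℝ)) :
    ∃ (O : EuclideanSpace ℝ (Fin 2)) (ρ : ℝ),
      ∀ p ∈ ({midpoint ℝ B C, midpoint ℝ C A, midpoint ℝ A B, FA, FB, FC,
          midpoint ℝ H A, midpoint ℝ H B, midpoint ℝ H C} :
            Set (EuclideanSpace ℝ (Fin 2))),
        dist O p = ρ := by
  -- the third orthogonality relation
  have hH3 : ⟪H - C, A - B⟫_ℝ = 0 := by
    have h1 := hH1
    have h2 := hH2
    simp only [inner_sub_left, inner_sub_right] at h1 h2 ⊢
    linear_combination h1 + h2 - real_inner_comm A C + real_inner_comm A B +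
      real_inner_comm B C
  -- the nine-point center, three ways
  have eCA : midpoint ℝ (midpoint ℝ B C) (midpoint ℝ H A)
      = midpoint ℝ (midpoint ℝ C A) (midpoint ℝ H B) := by
    simp only [midpoint_eq_smul_add, invOf_eq_inv]
    module
  have eAB : midpoint ℝ (midpoint ℝ B C) (midpoint ℝ H A)
      = midpoint ℝ (midpoint ℝ A B) (midpoint ℝ H C) := by
    simp only [midpoint_eq_smul_add, invOf_eq_inv]
    module
  -- the three "long diameters" have equal lengths
  have dCA : dist (midpoint ℝ C A) (midpoint ℝ H B) = dist (midpoint ℝ B C) (midpoint ℝ H A) := by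
    rw [dist_eq_norm, dist_eq_norm]
    apply (real_inner_add_sub_eq_zero_iff _ _).mp
    have e1 : (midpoint ℝ C A - midpoint ℝ H B) + (midpoint ℝ B C - midpoint ℝ H A)
        = C - H := by
      simp only [midpoint_eq_smul_add, invOf_eq_inv]; module
    have e2 : (midpoint ℝ C A - midpoint ℝ H B) - (midpoint ℝ B C - midpoint ℝ H A)
        = A - B := by
      simp only [midpoint_eq_smul_add, invOf_eq_inv]; module
    have e3 : C - H = -(H - C) := by abel
    rw [e1, e2, e3, inner_neg_left, hH3, neg_zero]
  have dAB : dist (midpoint ℝ A B) (midpoint ℝ H C) = dist (midpoint ℝ B C) (midpoint ℝ H A) := by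
    rw [dist_eq_norm, dist_eq_norm]
    apply (real_inner_add_sub_eq_zero_iff _ _).mp
    have e1 : (midpoint ℝ A B - midpoint ℝ H C) + (midpoint ℝ B C - midpoint ℝ H A)
        = B - H := by
      simp only [midpoint_eq_smul_add, invOf_eq_inv]; module
    have e2 : (midpoint ℝ A B - midpoint ℝ H C) - (midpoint ℝ B C - midpoint ℝ H A)
        = A - C := by
      simp only [midpoint_eq_smul_add, invOf_eq_inv]; module
    have e3 : B - H = -(H - B) := by abel
    rw [e1, e2, e3, inner_neg_left, hH2, neg_zero]
  -- a generic lemma for the feet of altitudes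
  have foot : ∀ P Q R F' : EuclideanSpace ℝ (Fin 2),
      F' ∈ affineSpan ℝ ({Q, R} : Set (EuclideanSpace ℝ (Fin 2))) →
      ⟪P - F', R - Q⟫_ℝ = 0 → ⟪H - P, R - Q⟫_ℝ = 0 →
      dist (midpoint ℝ (midpoint ℝ Q R) (midpoint ℝ H P)) F'
        = dist (midpoint ℝ (midpoint ℝ Q R) (midpoint ℝ H P)) (midpoint ℝ Q R) := by
    intro P Q R F' hmem hperp hHperp
    apply nine_aux_diameter
    obtain ⟨r, hr⟩ := (vadd_left_mem_affineSpan_pair (k := ℝ) (p₁ := Q) (p₂ := R)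
      (v := F' - Q)).mp (by simpa using hmem)
    have hF' : F' = r • (R - Q) + Q := by
      have h : F' - Q = r • (R - Q) := by simpa using hr.symm
      linear_combination (norm := module) h
    have e1 : midpoint ℝ Q R - F' = ((2 : ℝ)⁻¹ - r) • (R - Q) := by
      rw [hF']
      simp only [midpoint_eq_smul_add, invOf_eq_inv]
      module
    have e2 : midpoint ℝ H P - F' = (2 : ℝ)⁻¹ • (H - P) + (P - F') := by
      simp only [midpoint_eq_smul_add, invOf_eq_inv]
      module
    have c1 : ⟪R - Q, H - P⟫_ℝ = 0 := by rw [real_inner_comm]; exact hHperp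
    have c2 : ⟪R - Q, P - F'⟫_ℝ = 0 := by rw [real_inner_comm]; exact hperp
    rw [e1, e2, real_inner_smul_left, inner_add_right, real_inner_smul_right, c1, c2]
    ring
  refine ⟨midpoint ℝ (midpoint ℝ B C) (midpoint ℝ H A),
    ‖(2 : ℝ)‖⁻¹ * dist (midpoint ℝ B C) (midpoint ℝ H A), ?_⟩
  have k1 : dist (midpoint ℝ (midpoint ℝ B C) (midpoint ℝ H A)) (midpoint ℝ B C)
      = ‖(2 : ℝ)‖⁻¹ * dist (midpoint ℝ B C) (midpoint ℝ H A) := dist_midpoint_left _ _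
  have k2 : dist (midpoint ℝ (midpoint ℝ B C) (midpoint ℝ H A)) (midpoint ℝ C A)
      = ‖(2 : ℝ)‖⁻¹ * dist (midpoint ℝ B C) (midpoint ℝ H A) := by
    rw [eCA, dist_midpoint_left, dCA]
  have k3 : dist (midpoint ℝ (midpoint ℝ B C) (midpoint ℝ H A)) (midpoint ℝ A B)
      = ‖(2 : ℝ)‖⁻¹ * dist (midpoint ℝ B C) (midpoint ℝ H A) := by
    rw [eAB, dist_midpoint_left, dAB]
  have k4 : dist (midpoint ℝ (midpoint ℝ B C) (midpoint ℝ H A)) FA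
      = ‖(2 : ℝ)‖⁻¹ * dist (midpoint ℝ B C) (midpoint ℝ H A) := by
    rw [foot A B C FA hFA.1 hFA.2 hH1, dist_midpoint_left]
  have k5 : dist (midpoint ℝ (midpoint ℝ B C) (midpoint ℝ H A)) FB
      = ‖(2 : ℝ)‖⁻¹ * dist (midpoint ℝ B C) (midpoint ℝ H A) := by
    rw [eCA, foot B C A FB hFB.1 hFB.2 hH2, dist_midpoint_left, dCA]
  have k6 : dist (midpoint ℝ (midpoint ℝ B C) (midpoint ℝ H A)) FC
      = ‖(2 : ℝ)‖⁻¹ * dist (midpoint ℝ B C) (midpoint ℝ H A) := by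
    have hH3' : ⟪H - C, B - A⟫_ℝ = 0 := by
      have e : B - A = -(A - B) := by abel
      rw [e, inner_neg_right, hH3, neg_zero]
    rw [eAB, foot C A B FC hFC.1 hFC.2 hH3', dist_midpoint_left, dAB]
  have k7 : dist (midpoint ℝ (midpoint ℝ B C) (midpoint ℝ H A)) (midpoint ℝ H A)
      = ‖(2 : ℝ)‖⁻¹ * dist (midpoint ℝ B C) (midpoint ℝ H A) := dist_midpoint_right _ _
  have k8 : dist (midpoint ℝ (midpoint ℝ B C) (midpoint ℝ H A)) (midpoint ℝ H B)
      = ‖(2 : ℝ)‖⁻¹ * dist (midpoint ℝ B C) (midpoint ℝ H A) := by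
    rw [eCA, dist_midpoint_right, dCA]
  have k9 : dist (midpoint ℝ (midpoint ℝ B C) (midpoint ℝ H A)) (midpoint ℝ H C)
      = ‖(2 : ℝ)‖⁻¹ * dist (midpoint ℝ B C) (midpoint ℝ H A) := by
    rw [eAB, dist_midpoint_right, dAB]
  intro p hp
  simp only [Set.mem_insert_iff, Set.mem_singleton_iff] at hp
  rcases hp with rfl | rfl | rfl | rfl | rfl | rfl | rfl | rfl | rfl
  exacts [k1, k2, k3, k4, k5, k6, k7, k8, k9]
end
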